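/- Convergence in Wasserstein–Orlicz distance implies narrow convergence: if W_ψ(μₙ, μ) → 0 then μₙ → μ narrowly in P(X), i.e. ∫φ dμₙ → ∫φ dμ for every bounded continuous φ:X→ℝ. -/

import Mathlib

open MeasureTheory Filter Set ENNReal NNReal Topology

noncomputable section

/-- Luxemburg (Orlicz) norm of a nonnegative function. -/
def luxNorm (ψ : ℝ≥0∞ → ℝ≥0∞) {Ω : Type*} [MeasurableSpace Ω]
    (ν : Measure Ω) (u : Ω → ℝ≥0∞) : ℝ≥0∞ :=
  sInf {l : ℝ≥0∞ | 0 < l ∧ ∫⁻ x, ψ (u x / l) ∂ν ≤ 1}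

/-- Standard assumptions on the Orlicz function `ψ`: convex, lower semicontinuous,
non-decreasing, `ψ 0 = 0`, `ψ x → ∞` as `x → ∞`. -/
structure IsOrlicz (ψ : ℝ≥0∞ → ℝ≥0∞) : Prop where
  convex : ∀ a b x y : ℝ≥0∞, a + b = 1 → ψ (a * x + b * y) ≤ a * ψ x + b * ψ y
  lsc : LowerSemicontinuous ψ
  mono : Monotone ψ
  zero : ψ 0 = 0
  tendsto_top : ∀ C : ℝ≥0∞, ∃ M : ℝ≥0∞, ∀ x, M ≤ x → C ≤ ψ x

/-- Superlinearity at infinity: `ψ x / x → ∞`. -/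
def Superlinear (ψ : ℝ≥0∞ → ℝ≥0∞) : Prop :=
  ∀ C : ℝ≥0, ∃ M : ℝ≥0, ∀ x : ℝ≥0, M ≤ x → (C : ℝ≥0∞) * x ≤ ψ x

/-- Null right derivative at `0`: `ψ x / x → 0` as `x → 0⁺`. -/
def FlatAtZero (ψ : ℝ≥0∞ → ℝ≥0∞) : Prop :=
  ∀ ε : ℝ≥0, 0 < ε → ∃ δ : ℝ≥0, 0 < δ ∧ ∀ x : ℝ≥0, 0 < x → x ≤ δ → ψ x ≤ (ε : ℝ≥0∞) * x

/-- Legendre conjugate `ψ*(y) = sup_{x ≥ 0} (x y - ψ x)`. -/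
def conjOrlicz (ψ : ℝ≥0∞ → ℝ≥0∞) (y : ℝ≥0∞) : ℝ≥0∞ :=
  ⨆ x : ℝ≥0, (x : ℝ≥0∞) * y - ψ x

/-- Generalized inverse of `ψ` (with the convention of the paper). -/
def psiInv (ψ : ℝ≥0∞ → ℝ≥0∞) (s : ℝ≥0∞) : ℝ≥0∞ :=
  sSup {r : ℝ≥0∞ | ψ r ≤ s}

/-- `(X, τ, d)` is an extended Polish space: `d` is an extended distance, complete,
`d`-convergence implies `τ`-convergence, and `d` is `τ × τ` lower semicontinuous. -/
structure IsExtPolish (X : Type*) [TopologicalSpace X] (d : X → X → ℝ≥0∞) : Prop where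
  symm : ∀ x y, d x y = d y x
  eq_zero_iff : ∀ x y, d x y = 0 ↔ x = y
  triangle : ∀ x y z, d x z ≤ d x y + d y z
  complete : ∀ u : ℕ → X,
    (∀ ε : ℝ≥0∞, 0 < ε → ∃ N, ∀ m n, N ≤ m → N ≤ n → d (u m) (u n) < ε) →
    ∃ x, Tendsto (fun n => d (u n) x) atTop (𝓝 0)
  compat : ∀ (u : ℕ → X) (x : X),
    Tendsto (fun n => d (u n) x) atTop (𝓝 0) → Tendsto u atTop (𝓝 x)
  lsc : LowerSemicontinuous fun p : X × X => d p.1 p.2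

/-- Admissible transport plans between `μ` and `ν`. -/
def Couplings {X : Type*} [MeasurableSpace X] (μ ν : Measure X) : Set (Measure (X × X)) :=
  {γ | IsProbabilityMeasure γ ∧ γ.map Prod.fst = μ ∧ γ.map Prod.snd = ν}

/-- The Wasserstein–Orlicz extended distance. -/
def Wass (ψ : ℝ≥0∞ → ℝ≥0∞) {X : Type*} [MeasurableSpace X] (d : X → X → ℝ≥0∞)
    (μ ν : Measure X) : ℝ≥0∞ :=
  ⨅ γ ∈ Couplings μ ν, luxNorm ψ γ (fun p : X × X => d p.1 p.2)

/-- Absolutely continuous curve with finite `L^ψ` energy with respect to the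
extended distance `ρ`, on the interval `[a, b]`. -/
def IsACpsi (ψ : ℝ≥0∞ → ℝ≥0∞) {A : Type*} (ρ : A → A → ℝ≥0∞)
    (a b : ℝ) (u : ℝ → A) : Prop :=
  ∃ m : ℝ → ℝ≥0∞, luxNorm ψ (volume.restrict (Set.Icc a b)) m < ⊤ ∧
    ∀ s t : ℝ, a ≤ s → s ≤ t → t ≤ b → ρ (u s) (u t) ≤ ∫⁻ r in Set.Icc s t, m r

/-- The metric derivative of the curve `u` (with values in a space with extended
distance `ρ`) at time `t` within the interval `I` equals `L`. -/
def HasMDeriv {A : Type*} (ρ : A → A → ℝ≥0∞) (u : ℝ → A) (I : Set ℝ) (t : ℝ)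
    (L : ℝ≥0∞) : Prop :=
  Tendsto (fun h : ℝ => ρ (u (t + h)) (u t) / ENNReal.ofReal |h|)
    (𝓝[{h : ℝ | h ≠ 0 ∧ t + h ∈ I}] 0) (𝓝 L)

/-- The support of a Borel measure. -/
def measSupport {Y : Type*} [TopologicalSpace Y] [MeasurableSpace Y] (μ : Measure Y) : Set Y :=
  {y | ∀ U ∈ 𝓝 y, 0 < μ U}

lemma IsOrlicz.coercive {ψ : ℝ≥0∞ → ℝ≥0∞} (hψ : IsOrlicz ψ) {C : ℝ≥0∞} (hC : C ≠ ⊤) :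
    ∃ M : ℝ≥0∞, M ≠ ⊤ ∧ ∀ x, M ≤ x → C ≤ ψ x := by
  have htop : ψ ⊤ = ⊤ := by
    by_contra h
    obtain ⟨M, hM⟩ := hψ.tendsto_top (ψ ⊤ + 1)
    exact absurd (hM ⊤ le_top) (by simpa using not_le.mpr (ENNReal.lt_add_right h one_ne_zero))
  have hlsc : ∀ᶠ x in 𝓝 (⊤ : ℝ≥0∞), C < ψ x := hψ.lsc ⊤ C (by show C < ψ ⊤; rw [htop]; exact hC.lt_top)
  rw [ENNReal.nhds_top_basis.eventually_iff] at hlsc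
  obtain ⟨a, ha, h⟩ := hlsc
  refine ⟨a + 1, by simp [ha.ne], fun x hx => ?_⟩
  exact (h (lt_of_lt_of_le (ENNReal.lt_add_right ha.ne one_ne_zero) hx)).le

/-- convergence in `W_ψ` implies narrow convergence. -/
theorem narrow_of_wass_tendsto {X : Type*} [TopologicalSpace X] [PolishSpace X]
    [MeasurableSpace X] [BorelSpace X]
    (d : X → X → ℝ≥0∞) (hX : IsExtPolish X d)
    (ψ : ℝ≥0∞ → ℝ≥0∞) (hψ : IsOrlicz ψ)
    (μseq : ℕ → Measure X) (μ : Measure X)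
    (hprob : ∀ n, IsProbabilityMeasure (μseq n)) [IsProbabilityMeasure μ]
    (hconv : Tendsto (fun n => Wass ψ d (μseq n) μ) atTop (𝓝 0)) :
    ∀ φ : BoundedContinuousFunction X ℝ,
      Tendsto (fun n => ∫ x, φ x ∂(μseq n)) atTop (𝓝 (∫ x, φ x ∂μ)) := by
  intro φ
  haveI hne : Nonempty X := by
    by_contra h
    rw [not_nonempty_iff] at h
    have h1 := measure_univ (μ := μ)
    rw [Set.univ_eq_empty_iff.mpr h, measure_empty] at h1
    exact zero_ne_one h1
  have hdm : Measurable (fun p : X × X => d p.1 p.2) := hX.lsc.measurable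
  have hψm : Measurable ψ := hψ.lsc.measurable
  -- choose near-optimal couplings
  have hex : ∀ n, ∃ γ : Measure (X × X), γ ∈ Couplings (μseq n) μ ∧
      luxNorm ψ γ (fun p => d p.1 p.2) ≤ Wass ψ d (μseq n) μ + (↑(n + 1))⁻¹ := by
    intro n
    haveI := hprob n
    by_cases h : Wass ψ d (μseq n) μ = ⊤
    · refine ⟨(μseq n).prod μ, ⟨inferInstance, ?_, ?_⟩, by simp [h]⟩
      · simp
      · simp
    · have hlt : Wass ψ d (μseq n) μ < Wass ψ d (μseq n) μ + (↑(n + 1))⁻¹ :=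
        ENNReal.lt_add_right h (by simp)
      have h2 : (⨅ γ ∈ Couplings (μseq n) μ, luxNorm ψ γ (fun p : X × X => d p.1 p.2)) <
          Wass ψ d (μseq n) μ + (↑(n + 1))⁻¹ := hlt
      simp only [iInf_lt_iff] at h2
      obtain ⟨γ, hγ, hlt'⟩ := h2
      exact ⟨γ, hγ, hlt'.le⟩
  choose γ hγc hγl using hex
  haveI hγp : ∀ n, IsProbabilityMeasure (γ n) := fun n => (hγc n).1
  -- moment bound
  have hP : ∀ δ : ℝ≥0∞, 0 < δ → ∀ᶠ n in atTop,
      ∫⁻ p, ψ (d p.1 p.2 / δ) ∂(γ n) ≤ 1 := by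
    intro δ hδ
    set δ' : ℝ≥0∞ := min δ 1 with hδ'def
    have hδ'0 : 0 < δ' := lt_min hδ zero_lt_one
    have hδ'δ : δ' ≤ δ := min_le_left _ _
    have hhalf : 0 < δ' / 2 := ENNReal.div_pos hδ'0.ne' (by norm_num)
    have h1 : ∀ᶠ n in atTop, Wass ψ d (μseq n) μ < δ' / 2 := hconv.eventually_lt_const hhalf
    have h3 : Tendsto (fun n : ℕ => ((↑(n + 1) : ℝ≥0∞))⁻¹) atTop (𝓝 0) :=
      ENNReal.tendsto_inv_nat_nhds_zero.comp (tendsto_add_atTop_nat 1)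
    have h2 : ∀ᶠ n : ℕ in atTop, ((↑(n + 1) : ℝ≥0∞))⁻¹ < δ' / 2 := h3.eventually_lt_const hhalf
    filter_upwards [h1, h2] with n hn1 hn2
    have hlux : luxNorm ψ (γ n) (fun p => d p.1 p.2) < δ' := by
      refine lt_of_le_of_lt (hγl n) ?_
      calc Wass ψ d (μseq n) μ + (↑(n + 1))⁻¹ < δ' / 2 + δ' / 2 := ENNReal.add_lt_add hn1 hn2
        _ = δ' := ENNReal.add_halves δ'
    rw [luxNorm, sInf_lt_iff] at hlux
    obtain ⟨l, ⟨hl0, hlint⟩, hlδ⟩ := hlux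
    refine le_trans (lintegral_mono fun p => hψ.mono ?_) hlint
    exact ENNReal.div_le_div_left (le_trans hlδ.le hδ'δ) _
  -- Markov-type bound
  have hB : ∀ r κ : ℝ≥0∞, 0 < r → r ≠ ⊤ → 0 < κ → κ ≠ ⊤ → ∀ᶠ n in atTop,
      (γ n) {p : X × X | r ≤ d p.1 p.2} ≤ κ := by
    intro r κ hr hrt hκ hκt
    obtain ⟨M', hM't, hM'⟩ := hψ.coercive (C := κ⁻¹) (by simp [hκ.ne'])
    set δ := r / (M' + 1) with hδdef
    have hδ0 : 0 < δ := ENNReal.div_pos hr.ne' (by simp [hM't])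
    have hδt : δ ≠ ⊤ := by
      rw [hδdef]
      exact (ENNReal.div_lt_top hrt (by simp)).ne
    have hrδ : κ⁻¹ ≤ ψ (r / δ) := by
      refine hM' _ ?_
      rw [ENNReal.le_div_iff_mul_le (Or.inl hδ0.ne') (Or.inl hδt)]
      calc M' * δ ≤ (M' + 1) * δ := by gcongr; exact le_self_add
        _ ≤ r := by rw [hδdef]; exact ENNReal.mul_div_le
    filter_upwards [hP δ hδ0] with n hn
    have hmono : (γ n) {p : X × X | r ≤ d p.1 p.2} ≤
        (γ n) {p : X × X | κ⁻¹ ≤ ψ (d p.1 p.2 / δ)} := by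
      refine measure_mono fun p hp => le_trans hrδ (hψ.mono ?_)
      exact ENNReal.div_le_div_right hp _
    have hcheb := mul_meas_ge_le_lintegral₀ (μ := γ n)
      ((hψm.comp (hdm.div_const δ)).aemeasurable) (κ⁻¹)
    have hle1 : κ⁻¹ * (γ n) {p : X × X | r ≤ d p.1 p.2} ≤ 1 :=
      le_trans (mul_le_mul_right hmono _) (le_trans hcheb hn)
    have h4 : (γ n) {p : X × X | r ≤ d p.1 p.2} * κ⁻¹ ≤ 1 := by rwa [mul_comm] at hle1
    have h5 : (γ n) {p : X × X | r ≤ d p.1 p.2} ≤ 1 / κ⁻¹ :=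
      (ENNReal.le_div_iff_mul_le (Or.inl (ENNReal.inv_ne_zero.mpr hκt))
        (Or.inl (ENNReal.inv_ne_top.mpr hκ.ne'))).mpr h4
    rwa [one_div, inv_inv] at h5
  -- disintegration over the second marginal
  let ρ : ℕ → Measure (X × X) := fun n => (γ n).map Prod.swap
  haveI hρp : ∀ n, IsProbabilityMeasure (ρ n) := fun n =>
    Measure.isProbabilityMeasure_map measurable_swap.aemeasurable
  have hρf : ∀ n, (ρ n).fst = μ := by
    intro n
    rw [show ρ n = (γ n).map Prod.swap from rfl, Measure.fst_map_swap]
    exact (hγc n).2.2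
  have key : ∀ (s : Set (X × X)), MeasurableSet s → ∀ n,
      (γ n) s = ∫⁻ y, (ρ n).condKernel y (Prod.mk y ⁻¹' (Prod.swap ⁻¹' s)) ∂μ := by
    intro s hs n
    have h1 : (γ n) s = (ρ n) (Prod.swap ⁻¹' s) := by
      rw [show ρ n = (γ n).map Prod.swap from rfl,
        Measure.map_apply measurable_swap (measurable_swap hs)]
      simp [Set.preimage_preimage]
    rw [h1]
    conv_lhs => rw [← (ρ n).disintegrate (ρ n).condKernel]
    rw [Measure.compProd_apply (measurable_swap hs), hρf n]
  -- the final estimate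
  rw [Metric.tendsto_atTop]
  intro ε hε
  set M : ℝ := ‖φ‖ with hM
  have hM0 : 0 ≤ M := norm_nonneg φ
  set η : ℝ := ε / 4 with hη
  have hη0 : 0 < η := by positivity
  set κ' : ℝ≥0∞ := ENNReal.ofReal (ε / (8 * (M + 1))) with hκ'
  have hκ'0 : 0 < κ' := by
    rw [hκ']
    exact ENNReal.ofReal_pos.mpr (by positivity)
  have hκ't : κ' ≠ ⊤ := ENNReal.ofReal_ne_top
  -- the bad sets
  let C : ℕ → Set (X × X) := fun m =>
    {p | d p.1 p.2 ≤ (↑(m + 1))⁻¹ ∧ η ≤ |φ p.1 - φ p.2|}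
  have hCmeas : ∀ m, MeasurableSet (C m) := by
    intro m
    refine (hdm measurableSet_Iic).inter ?_
    exact measurableSet_le measurable_const
      (((φ.continuous.comp continuous_fst).sub
        (φ.continuous.comp continuous_snd)).abs.measurable)
  -- kernel mass of the bad sections, sup over n
  let H : ℕ → X → ℝ≥0∞ := fun m y =>
    ⨆ n, (ρ n).condKernel y {x | d x y ≤ (↑(m + 1))⁻¹ ∧ η ≤ |φ x - φ y|}
  have hsect : ∀ m y, (Prod.mk y ⁻¹' (Prod.swap ⁻¹' C m)) =
      {x | d x y ≤ (↑(m + 1))⁻¹ ∧ η ≤ |φ x - φ y|} := fun m y => rfl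
  have hHmeas : ∀ m, Measurable (H m) := by
    intro m
    refine Measurable.iSup fun n => ?_
    have h5 := ProbabilityTheory.Kernel.measurable_kernel_prodMk_left
      (κ := (ρ n).condKernel) (measurable_swap (hCmeas m))
    exact h5
  have hHlim : ∀ y, Tendsto (fun m => H m y) atTop (𝓝 0) := by
    intro y
    have hstop : ∃ m₀ : ℕ, ∀ x, d x y ≤ (↑(m₀ + 1))⁻¹ → |φ x - φ y| < η := by
      by_contra hcon
      push_neg at hcon
      choose u hu1 hu2 using hcon
      have hd : Tendsto (fun m => d (u m) y) atTop (𝓝 0) := by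
        refine tendsto_of_tendsto_of_tendsto_of_le_of_le tendsto_const_nhds ?_
          (fun m => zero_le) hu1
        exact ENNReal.tendsto_inv_nat_nhds_zero.comp (tendsto_add_atTop_nat 1)
      have hu : Tendsto u atTop (𝓝 y) := hX.compat u y hd
      have hφ : Tendsto (fun m => |φ (u m) - φ y|) atTop (𝓝 0) := by
        have h1 : Tendsto (fun m => φ (u m)) atTop (𝓝 (φ y)) :=
          (φ.continuous.tendsto y).comp hu
        have h2 := (h1.sub (tendsto_const_nhds (x := φ y))).abs
        simpa using h2
      obtain ⟨m, hmlt⟩ := (hφ.eventually_lt_const hη0).exists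
      exact absurd (hu2 m) (not_le.mpr hmlt)
    obtain ⟨m₀, hm₀⟩ := hstop
    refine Tendsto.congr' ?_ tendsto_const_nhds
    filter_upwards [eventually_ge_atTop m₀] with m hm
    have hempty : {x | d x y ≤ (↑(m + 1))⁻¹ ∧ η ≤ |φ x - φ y|} = (∅ : Set X) := by
      ext x
      simp only [mem_setOf_eq, mem_empty_iff_false, iff_false, not_and, not_le]
      intro hle
      refine hm₀ x (le_trans hle ?_)
      exact ENNReal.inv_le_inv.mpr (by exact_mod_cast Nat.succ_le_succ hm)
    show (0 : ℝ≥0∞) = H m y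
    have hzero : H m y = 0 := by
      rw [show H m y =
        ⨆ n, (ρ n).condKernel y {x | d x y ≤ (↑(m + 1))⁻¹ ∧ η ≤ |φ x - φ y|} from rfl,
        hempty]
      simp
    exact hzero.symm
  have hHint : Tendsto (fun m => ∫⁻ y, H m y ∂μ) atTop (𝓝 0) := by
    have h0 : 𝓝 (0 : ℝ≥0∞) = 𝓝 (∫⁻ _, (0 : ℝ≥0∞) ∂μ) := by simp
    rw [h0]
    refine tendsto_lintegral_of_dominated_convergence (fun _ => 1) hHmeas ?_ ?_ ?_
    · intro m
      refine Filter.Eventually.of_forall fun y => ?_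
      exact iSup_le fun n => prob_le_one
    · simp
    · exact Filter.Eventually.of_forall hHlim
  -- choose m
  obtain ⟨m, hm⟩ := (hHint.eventually_le_const hκ'0).exists
  have hγC : ∀ n, (γ n) (C m) ≤ κ' := by
    intro n
    rw [key (C m) (hCmeas m) n]
    refine le_trans ?_ hm
    refine lintegral_mono fun y => ?_
    rw [hsect m y]
    exact le_iSup (fun n => (ρ n).condKernel y _) n
  -- the tail set
  let D : Set (X × X) := {p | ¬ d p.1 p.2 ≤ (↑(m + 1))⁻¹}
  have hDmeas : MeasurableSet D := (hdm measurableSet_Iic).compl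
  have hγD : ∀ᶠ n in atTop, (γ n) D ≤ κ' := by
    refine (hB ((↑(m + 1))⁻¹) κ' ?_ ?_ hκ'0 hκ't).mono fun n hn => le_trans ?_ hn
    · simp
    · simp
    · refine measure_mono fun p hp => ?_
      exact le_of_not_gt fun hlt => hp (le_of_lt hlt)
  -- conclusion
  rw [eventually_atTop] at hγD
  obtain ⟨N, hN⟩ := hγD
  refine ⟨N, fun n hn => ?_⟩
  have hest : |(∫ x, φ x ∂(μseq n)) - ∫ x, φ x ∂μ| ≤ η + 2 * M * ((κ' + κ').toReal) := by
    haveI := hprob n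
    have hμn : μseq n = (γ n).map Prod.fst := ((hγc n).2.1).symm
    have hμ2 : μ = (γ n).map Prod.snd := ((hγc n).2.2).symm
    have h1 : ∫ x, φ x ∂(μseq n) = ∫ p : X × X, φ p.1 ∂(γ n) := by
      rw [hμn, integral_map measurable_fst.aemeasurable]
      exact (φ.continuous.measurable.stronglyMeasurable.aestronglyMeasurable)
    have h2 : ∫ x, φ x ∂μ = ∫ p : X × X, φ p.2 ∂(γ n) := by
      rw [hμ2, integral_map measurable_snd.aemeasurable]
      exact (φ.continuous.measurable.stronglyMeasurable.aestronglyMeasurable)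
    have hint1 : Integrable (fun p : X × X => φ p.1) (γ n) :=
      (φ.compContinuous (⟨Prod.fst, continuous_fst⟩ : C(X × X, X))).integrable _
    have hint2 : Integrable (fun p : X × X => φ p.2) (γ n) :=
      (φ.compContinuous (⟨Prod.snd, continuous_snd⟩ : C(X × X, X))).integrable _
    have hsub : (∫ x, φ x ∂(μseq n)) - ∫ x, φ x ∂μ =
        ∫ p : X × X, (φ p.1 - φ p.2) ∂(γ n) := by
      rw [h1, h2, ← integral_sub hint1 hint2]
    rw [hsub]
    have habs : |∫ p : X × X, (φ p.1 - φ p.2) ∂(γ n)| ≤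
        ∫ p : X × X, |φ p.1 - φ p.2| ∂(γ n) := by
      simpa [Real.norm_eq_abs] using
        norm_integral_le_integral_norm (μ := γ n) (fun p : X × X => φ p.1 - φ p.2)
    refine le_trans habs ?_
    set E : Set (X × X) := C m ∪ D with hE
    have hEmeas : MeasurableSet E := (hCmeas m).union hDmeas
    have hgint : Integrable (fun p : X × X => η + E.indicator (fun _ => 2 * M) p) (γ n) :=
      (integrable_const η).add ((integrable_const (2 * M)).indicator hEmeas)
    have hptwise : ∀ p : X × X, |φ p.1 - φ p.2| ≤ η + E.indicator (fun _ => 2 * M) p := by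
      intro p
      have hb1 : |φ p.1| ≤ M := by simpa [Real.norm_eq_abs] using φ.norm_coe_le_norm p.1
      have hb2 : |φ p.2| ≤ M := by simpa [Real.norm_eq_abs] using φ.norm_coe_le_norm p.2
      by_cases hp : p ∈ E
      · rw [Set.indicator_of_mem hp]
        have h6 : |φ p.1 - φ p.2| ≤ |φ p.1| + |φ p.2| := abs_sub _ _
        linarith
      · rw [Set.indicator_of_notMem hp]
        rw [hE, Set.mem_union] at hp
        push_neg at hp
        obtain ⟨hpC, hpD⟩ := hp
        have hdle : d p.1 p.2 ≤ (↑(m + 1))⁻¹ := not_not.mp hpD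
        have h7 : ¬(d p.1 p.2 ≤ (↑(m + 1))⁻¹ ∧ η ≤ |φ p.1 - φ p.2|) := hpC
        simp only [hdle, true_and, not_le] at h7
        linarith
    have hintabs : Integrable (fun p : X × X => |φ p.1 - φ p.2|) (γ n) :=
      (hint1.sub hint2).abs
    refine le_trans (integral_mono hintabs hgint hptwise) ?_
    rw [integral_add (integrable_const η) ((integrable_const (2 * M)).indicator hEmeas),
      integral_const, integral_indicator_const _ hEmeas]
    simp only [measureReal_def, measure_univ, ENNReal.toReal_one, smul_eq_mul, one_mul]
    have hEbound : (γ n) E ≤ κ' + κ' :=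
      le_trans (measure_union_le _ _) (add_le_add (hγC n) (hN n hn))
    have htr := ENNReal.toReal_mono (ENNReal.add_ne_top.mpr ⟨hκ't, hκ't⟩) hEbound
    nlinarith [ENNReal.toReal_nonneg (a := (γ n) E)]
  rw [Real.dist_eq]
  refine lt_of_le_of_lt hest ?_
  have hκtr : (κ' + κ').toReal = 2 * (ε / (8 * (M + 1))) := by
    rw [hκ', ← ENNReal.ofReal_add (by positivity) (by positivity),
      ENNReal.toReal_ofReal (by positivity)]
    ring
  rw [hκtr, hη]
  have hMle : M / (M + 1) ≤ 1 := by
    rw [div_le_one (by positivity)]; linarith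
  have h3 : 2 * M * (2 * (ε / (8 * (M + 1)))) = (M / (M + 1)) * (ε / 2) := by
    field_simp; ring
  have h2 : 2 * M * (2 * (ε / (8 * (M + 1)))) ≤ ε / 2 := by
    rw [h3]
    calc (M / (M + 1)) * (ε / 2) ≤ 1 * (ε / 2) :=
          mul_le_mul_of_nonneg_right hMle (by positivity)
      _ = ε / 2 := one_mul _
  linarith
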